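/- Let 1<p<q<∞ and 0<α<n with 1/p − 1/q = α/n, and let w be a weight on ℝ^n with A_{p,q}(w) < ∞. Then the one-tailed characteristic satisfies Ā_{p,q}(w) ≤ C_{p,q,n} A_{p,q}(w)^{1+max{p'/q, q/p'}}, where Ā_{p,q}(w) includes a sup over cubes Q of (avg over ℝ^n of ŝ_Q^q w^q)^{1/q}(avg_Q w^{−p'})^{1/p'} plus the dual term, with tail ŝ_Q(x) = (1+|x−c_Q|/|Q|^{1/n})^{α−n}. -/

import Mathlib

open MeasureTheory ENNReal Set

noncomputable section

abbrev E (n : ℕ) := EuclideanSpace ℝ (Fin n)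

/-- The axis-parallel cube in `ℝ^n` with center `c` and side length `s`. -/
def cube (n : ℕ) (c : E n) (s : ℝ) : Set (E n) :=
  {x | ∀ i, |x i - c i| ≤ s / 2}

/-- The tail `ŝ_Q(x) = (1 + |x−c_Q|/|Q|^{1/n})^{α−n}` of a cube with center `c` and side
length `s`. -/
noncomputable def tail (n : ℕ) (α : ℝ) (c : E n) (s : ℝ) (x : E n) : ℝ≥0∞ :=
  ENNReal.ofReal ((1 + ‖x - c‖ / s) ^ (α - (n : ℝ)))

/-- The (no-tail) one-weight Muckenhoupt characteristic `A_{p,q}(w)`. -/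
noncomputable def Apq (n : ℕ) (p q : ℝ) (w : E n → ℝ≥0∞) : ℝ≥0∞ :=
  ⨆ (c : E n) (s : ℝ) (_ : 0 < s),
    ((ENNReal.ofReal (s ^ n))⁻¹ * ∫⁻ x in cube n c s, w x ^ q) ^ (1 / q) *
      ((ENNReal.ofReal (s ^ n))⁻¹ * ∫⁻ x in cube n c s, w x ^ (-(p / (p - 1)))) ^ (1 - 1 / p)

/-- The one-tailed one-weight characteristic `Ā_{p,q}(w)`: the sum of the two versions in
which exactly one factor carries the tail `ŝ_Q`. -/
noncomputable def AbarPq (n : ℕ) (α p q : ℝ) (w : E n → ℝ≥0∞) : ℝ≥0∞ :=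
  (⨆ (c : E n) (s : ℝ) (_ : 0 < s),
      ((ENNReal.ofReal (s ^ n))⁻¹ * ∫⁻ x, tail n α c s x ^ q * w x ^ q) ^ (1 / q) *
        ((ENNReal.ofReal (s ^ n))⁻¹ * ∫⁻ x in cube n c s, w x ^ (-(p / (p - 1)))) ^ (1 - 1 / p)) +
    ⨆ (c : E n) (s : ℝ) (_ : 0 < s),
      ((ENNReal.ofReal (s ^ n))⁻¹ * ∫⁻ x in cube n c s, w x ^ q) ^ (1 / q) *
        ((ENNReal.ofReal (s ^ n))⁻¹ *
            ∫⁻ x, tail n α c s x ^ (p / (p - 1)) * w x ^ (-(p / (p - 1)))) ^ (1 - 1 / p)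

variable {n : ℕ}
lemma cube_eq_preimage (c : E n) (s : ℝ) :
    cube n c s = (⇑(MeasurableEquiv.toLp 2 (Fin n → ℝ)).symm)⁻¹'
      (Set.univ.pi fun i => Icc (c i - s / 2) (c i + s / 2)) := by
  ext x
  simp only [cube, mem_setOf_eq, mem_preimage, mem_pi, mem_univ, forall_true_left, mem_Icc,
    MeasurableEquiv.coe_toLp_symm, MeasurableEquiv.coe_mk]
  refine forall_congr' fun i => ?_
  rw [abs_sub_le_iff]
  constructor
  · rintro ⟨h1, h2⟩; exact ⟨by linarith, by linarith⟩
  · rintro ⟨h1, h2⟩; exact ⟨by linarith, by linarith⟩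

lemma measurableSet_pi_Icc (c : E n) (s : ℝ) :
    MeasurableSet (Set.univ.pi fun i : Fin n => Icc (c i - s / 2) (c i + s / 2)) :=
  MeasurableSet.univ_pi fun _ => measurableSet_Icc

lemma measurableSet_cube (c : E n) (s : ℝ) : MeasurableSet (cube n c s) := by
  rw [cube_eq_preimage]
  exact (MeasurableEquiv.toLp 2 (Fin n → ℝ)).symm.measurable (measurableSet_pi_Icc c s)

lemma volume_cube (c : E n) {s : ℝ} (hs : 0 ≤ s) :
    volume (cube n c s) = ENNReal.ofReal (s ^ n) := by
  rw [cube_eq_preimage,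
    (EuclideanSpace.volume_preserving_symm_measurableEquiv_toLp (Fin n)).measure_preimage
      (measurableSet_pi_Icc c s).nullMeasurableSet, volume_pi_pi]
  have h : ∀ i : Fin n, volume (Icc (c i - s / 2) (c i + s / 2)) = ENNReal.ofReal s := by
    intro i; rw [Real.volume_Icc]; ring_nf
  simp only [h, Finset.prod_const, Finset.card_univ, Fintype.card_fin,
    ENNReal.ofReal_pow hs]

lemma cube_mono (c : E n) {s t : ℝ} (hst : s ≤ t) : cube n c s ⊆ cube n c t :=
  fun x hx i => (hx i).trans (by linarith)

lemma iUnion_cube (c : E n) {s : ℝ} (hs : 0 < s) :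
    ⋃ k : ℕ, cube n c ((2 : ℝ) ^ k * s) = univ := by
  ext x
  simp only [mem_iUnion, mem_univ, iff_true]
  obtain ⟨M, hM⟩ := Finset.exists_le (α := ℝ)
    ((Finset.univ.image fun i : Fin n => |x i - c i|) : Finset ℝ)
  obtain ⟨k, hk⟩ := pow_unbounded_of_one_lt (2 * M / s) (one_lt_two (α := ℝ))
  refine ⟨k, fun i => ?_⟩
  have hMi : |x i - c i| ≤ M := hM _ (Finset.mem_image_of_mem _ (Finset.mem_univ i))
  have h2 : 2 * M / s < 2 ^ k := hk
  rw [div_lt_iff₀ hs] at h2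
  calc |x i - c i| ≤ M := hMi
    _ ≤ 2 ^ k * s / 2 := by nlinarith
  
lemma abs_coord_le_norm (y : E n) (i : Fin n) : |y i| ≤ ‖y‖ := by
  rw [EuclideanSpace.norm_eq]
  have h1 : |y i| = Real.sqrt (‖y i‖ ^ 2) := by
    rw [Real.sqrt_sq_eq_abs, Real.norm_eq_abs, abs_abs]
  rw [h1]
  apply Real.sqrt_le_sqrt
  exact Finset.single_le_sum (f := fun j => ‖y j‖ ^ 2) (fun j _ => sq_nonneg _)
    (Finset.mem_univ i)

lemma rpow_ne_top' {x : ℝ≥0∞} (hx0 : x ≠ 0) (hxt : x ≠ ∞) (y : ℝ) : x ^ y ≠ ∞ := by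
  simp [ENNReal.rpow_eq_top_iff, hx0, hxt]

lemma rpow_ne_zero' {x : ℝ≥0∞} (hx0 : x ≠ 0) (hxt : x ≠ ∞) (y : ℝ) : x ^ y ≠ 0 := by
  simp [ENNReal.rpow_eq_zero_iff, hx0, hxt]

lemma Acond_mul {a b : ℝ} (ha : 0 < a) (hb : 0 < b) {V U m A : ℝ≥0∞}
    (hV0 : V ≠ 0) (hVt : V ≠ ∞) (hUt : U ≠ ∞) (hmt : m ≠ ∞)
    (h : (V⁻¹ * U) ^ (1 / a) * (V⁻¹ * m) ^ (1 / b) ≤ A) :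
    U * m ^ (a / b) ≤ A ^ a * V ^ (1 + a / b) := by
  have hVi : V⁻¹ ≠ ∞ := by simpa using hV0
  have h2 := ENNReal.rpow_le_rpow h ha.le
  rw [ENNReal.mul_rpow_of_ne_top (ENNReal.rpow_ne_top_of_nonneg (by positivity)
      (ENNReal.mul_ne_top hVi hUt)) (ENNReal.rpow_ne_top_of_nonneg (by positivity)
      (ENNReal.mul_ne_top hVi hmt)),
    ← ENNReal.rpow_mul, ← ENNReal.rpow_mul, one_div_mul_cancel ha.ne', ENNReal.rpow_one,
    show 1 / b * a = a / b by ring,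
    ENNReal.mul_rpow_of_ne_top hVi hmt] at h2
  -- h2 : V⁻¹ * U * (V⁻¹ ^ (a/b) * m ^ (a/b)) ≤ A ^ a
  have hVab0 : V ^ (1 + a / b) ≠ 0 := by
    simp [ENNReal.rpow_eq_zero_iff, hV0, hVt]
  have hVabt : V ^ (1 + a / b) ≠ ∞ := ENNReal.rpow_ne_top_of_nonneg (by positivity) hVt
  have key : V⁻¹ * U * (V⁻¹ ^ (a / b) * m ^ (a / b)) =
      U * m ^ (a / b) * (V ^ (1 + a / b))⁻¹ := by
    rw [ENNReal.inv_rpow, ENNReal.rpow_add _ _ hV0 hVt, ENNReal.rpow_one,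
      ENNReal.mul_inv (Or.inl hV0) (Or.inl hVt)]
    ring
  rw [key] at h2
  calc U * m ^ (a / b) = U * m ^ (a / b) * (V ^ (1 + a / b))⁻¹ * V ^ (1 + a / b) := by
        rw [mul_assoc, ENNReal.inv_mul_cancel hVab0 hVabt, mul_one]
    _ ≤ A ^ a * V ^ (1 + a / b) := mul_le_mul_left h2 _

lemma Acond_le {a b : ℝ} (ha : 0 < a) (hb : 0 < b) {V U m A : ℝ≥0∞}
    (hV0 : V ≠ 0) (hVt : V ≠ ∞) (hUt : U ≠ ∞) (hm0 : m ≠ 0) (hmt : m ≠ ∞)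
    (h : (V⁻¹ * U) ^ (1 / a) * (V⁻¹ * m) ^ (1 / b) ≤ A) :
    U ≤ A ^ a * V ^ (1 + a / b) * (m ^ (a / b))⁻¹ := by
  have h2 := Acond_mul ha hb hV0 hVt hUt hmt h
  have hmab0 : m ^ (a / b) ≠ 0 := by simp [ENNReal.rpow_eq_zero_iff, hm0, hmt]
  have hmabt : m ^ (a / b) ≠ ∞ := ENNReal.rpow_ne_top_of_nonneg (by positivity) hmt
  calc U = U * m ^ (a / b) * (m ^ (a / b))⁻¹ := by
        rw [mul_assoc, ENNReal.mul_inv_cancel hmab0 hmabt, mul_one]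
    _ ≤ A ^ a * V ^ (1 + a / b) * (m ^ (a / b))⁻¹ := mul_le_mul_left h2 _

lemma geom_denominator {e : ℝ≥0∞} (he0 : e ≠ 0) (he : e ≤ 1 / 2) {θ : ℝ}
    (hθ0 : 0 < θ) (hθ1 : θ ≤ 1) :
    ENNReal.ofReal θ * e ≤ 1 - (1 - e) ^ θ := by
  have het : e ≠ ∞ := (he.trans_lt (by norm_num)).ne
  set ε : ℝ := e.toReal with hε
  have hε0 : 0 < ε := ENNReal.toReal_pos he0 het
  have hε2 : ε ≤ 1 / 2 := by
    have := ENNReal.toReal_mono (by norm_num) he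
    simpa [ENNReal.toReal_div] using this
  have hee : e = ENNReal.ofReal ε := (ENNReal.ofReal_toReal het).symm
  have h1e : (1 : ℝ≥0∞) - e = ENNReal.ofReal (1 - ε) := by
    rw [hee, ← ENNReal.ofReal_one, ← ENNReal.ofReal_sub _ hε0.le]
  have hbase : (0:ℝ) < 1 - ε := by linarith
  have hreal : (1 - ε) ^ θ ≤ 1 - θ * ε := by
    have := Real.geom_mean_le_arith_mean2_weighted hθ0.le (by linarith : (0:ℝ) ≤ 1 - θ)
      hbase.le zero_le_one (by ring)
    rw [Real.one_rpow, mul_one, mul_one] at this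
    nlinarith [this]
  have h2 : (1 - e) ^ θ ≤ ENNReal.ofReal (1 - θ * ε) := by
    rw [h1e, ENNReal.ofReal_rpow_of_pos hbase]
    exact ENNReal.ofReal_le_ofReal hreal
  calc ENNReal.ofReal θ * e = ENNReal.ofReal (θ * ε) := by
        rw [hee, ENNReal.ofReal_mul hθ0.le]
    _ = 1 - ENNReal.ofReal (1 - θ * ε) := by
        rw [← ENNReal.ofReal_one, ← ENNReal.ofReal_sub _ (by nlinarith)]
        norm_num
    _ ≤ 1 - (1 - e) ^ θ := tsub_le_tsub_left h2 _
lemma measure_le_mul {a b : ℝ} (ha : 0 < a) (hb : 0 < b)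
    {u σ : E n → ℝ≥0∞} (hu : Measurable u) (hσ : Measurable σ)
    (hpt : ∀ x, u x ^ (b / (a + b)) * σ x ^ (a / (a + b)) = 1) (S : Set (E n)) :
    volume S ≤ (∫⁻ x in S, u x) ^ (b / (a + b)) * (∫⁻ x in S, σ x) ^ (a / (a + b)) := by
  have hab : 0 < a + b := by linarith
  have hconj : ((a + b) / b).HolderConjugate ((a + b) / a) := by
    refine Real.holderConjugate_iff.mpr ⟨?_, ?_⟩
    · rw [lt_div_iff₀ hb]; linarith
    · rw [inv_div, inv_div, ← add_div, add_comm, div_self (by positivity)]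
  have hH := ENNReal.lintegral_mul_le_Lp_mul_Lq (volume.restrict S) hconj
    (f := fun x => u x ^ (b / (a + b))) (g := fun x => σ x ^ (a / (a + b)))
    (hu.pow_const _).aemeasurable (hσ.pow_const _).aemeasurable
  have h1 : ∫⁻ x in S, ((fun x => u x ^ (b / (a + b))) * fun x => σ x ^ (a / (a + b))) x
      = volume S := by
    simp only [Pi.mul_apply, hpt]
    simp
  have h2 : ∀ x, (u x ^ (b / (a + b))) ^ ((a + b) / b) = u x := by
    intro x
    rw [← ENNReal.rpow_mul, div_mul_div_comm, mul_comm, div_self (by positivity),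
      ENNReal.rpow_one]
  have h3 : ∀ x, (σ x ^ (a / (a + b))) ^ ((a + b) / a) = σ x := by
    intro x
    rw [← ENNReal.rpow_mul, div_mul_div_comm, mul_comm, div_self (by positivity),
      ENNReal.rpow_one]
  rw [h1] at hH
  simp only [h2, h3] at hH
  have e1 : 1 / ((a + b) / b) = b / (a + b) := by field_simp
  have e2 : 1 / ((a + b) / a) = a / (a + b) := by field_simp
  rwa [e1, e2] at hH
lemma lint_pos {f : E n → ℝ≥0∞} (hf : Measurable f) (hf0 : ∀ x, 0 < f x)
    {S : Set (E n)} (hS : volume S ≠ 0) : ∫⁻ x in S, f x ≠ 0 := by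
  intro h
  rw [lintegral_eq_zero_iff hf] at h
  have h2 : (volume.restrict S) {a | ¬ f a = 0} = 0 := h
  rw [show {a | ¬ f a = 0} = univ from eq_univ_of_forall fun x => (hf0 x).ne',
    Measure.restrict_apply_univ] at h2
  exact hS h2

lemma fin_of_Acond {a b : ℝ} (ha : 0 < a) (hb : 0 < b) {V U m A : ℝ≥0∞}
    (hV0 : V ≠ 0) (hVt : V ≠ ∞) (hU0 : U ≠ 0) (hm0 : m ≠ 0) (hAt : A ≠ ∞)
    (h : (V⁻¹ * U) ^ (1 / a) * (V⁻¹ * m) ^ (1 / b) ≤ A) : U ≠ ∞ ∧ m ≠ ∞ := by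
  have hVi0 : V⁻¹ ≠ 0 := by simpa using hVt
  have hVit : V⁻¹ ≠ ∞ := by simpa using hV0
  constructor
  · intro hU
    apply hAt
    have h1 : (V⁻¹ * U) ^ (1 / a) = ∞ := by
      rw [hU, ENNReal.mul_top hVi0, ENNReal.top_rpow_of_pos (by positivity)]
    have h2 : (V⁻¹ * m) ^ (1 / b) ≠ 0 := by
      simp [ENNReal.rpow_eq_zero_iff, mul_ne_zero hVi0 hm0]; intro _; positivity
    rw [eq_top_iff, ← ENNReal.top_mul h2, ← h1]
    exact h
  · intro hm
    apply hAt
    have h1 : (V⁻¹ * m) ^ (1 / b) = ∞ := by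
      rw [hm, ENNReal.mul_top hVi0, ENNReal.top_rpow_of_pos (by positivity)]
    have h2 : (V⁻¹ * U) ^ (1 / a) ≠ 0 := by
      simp [ENNReal.rpow_eq_zero_iff, mul_ne_zero hVi0 hU0]; intro _; positivity
    rw [eq_top_iff, ← ENNReal.mul_top h2, ← h1]
    exact h

def Cval (n : ℕ) (a b α : ℝ) : ℝ≥0∞ :=
  (ENNReal.ofReal ((2:ℝ) ^ (2 * ((n:ℝ) - α) * a)) * (ENNReal.ofReal (min (a/b) 1))⁻¹ *
    (2:ℝ≥0∞) ^ ((a+b)/a)) ^ (1/a)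

lemma Cval_ne_top {a b α : ℝ} (ha : 0 < a) (hb : 0 < b) : Cval n a b α ≠ ∞ := by
  apply ENNReal.rpow_ne_top_of_nonneg (by positivity)
  refine ENNReal.mul_ne_top (ENNReal.mul_ne_top ENNReal.ofReal_ne_top ?_) ?_
  · simp only [ne_eq, ENNReal.inv_eq_top, ENNReal.ofReal_eq_zero, not_le]
    positivity
  · exact ENNReal.rpow_ne_top_of_nonneg (by positivity) (by norm_num)

set_option maxHeartbeats 2000000 in
lemma onesided (hn : 0 < n) (a b α : ℝ) (ha : 1 < a) (hb : 1 < b)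
    (hα : 0 < α) (hαn : α < n) (hbal : (α - n) * a + n = -(n * a / b))
    (u σ : E n → ℝ≥0∞) (hu : Measurable u) (hσ : Measurable σ)
    (hu0 : ∀ x, 0 < u x) (hσ0 : ∀ x, 0 < σ x)
    (hpt : ∀ x, u x ^ (b / (a + b)) * σ x ^ (a / (a + b)) = 1)
    (A : ℝ≥0∞) (hAt : A ≠ ∞) (hA1 : 1 ≤ A)
    (hAc : ∀ (c : E n) (s : ℝ), 0 < s →
      ((ENNReal.ofReal (s ^ n))⁻¹ * ∫⁻ x in cube n c s, u x) ^ (1 / a) *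
        ((ENNReal.ofReal (s ^ n))⁻¹ * ∫⁻ x in cube n c s, σ x) ^ (1 / b) ≤ A)
    (c : E n) (s : ℝ) (hs : 0 < s) :
    ((ENNReal.ofReal (s ^ n))⁻¹ * ∫⁻ x, tail n α c s x ^ a * u x) ^ (1 / a) *
      ((ENNReal.ofReal (s ^ n))⁻¹ * ∫⁻ x in cube n c s, σ x) ^ (1 / b)
      ≤ Cval n a b α * A ^ (1 + b / a) := by
  have ha0 : (0:ℝ) < a := by linarith
  have hb0 : (0:ℝ) < b := by linarith
  have hA0 : A ≠ 0 := (lt_of_lt_of_le zero_lt_one hA1).ne'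
  -- basic objects
  set ℓ : ℕ → ℝ := fun k => 2 ^ k * s with hℓdef
  set Q : ℕ → Set (E n) := fun k => cube n c (ℓ k) with hQdef
  set V : ℕ → ℝ≥0∞ := fun k => ENNReal.ofReal ((ℓ k) ^ n) with hVdef
  set U : ℕ → ℝ≥0∞ := fun k => ∫⁻ x in Q k, u x with hUdef
  set m : ℕ → ℝ≥0∞ := fun k => ∫⁻ x in Q k, σ x with hmdef
  have hℓ : ∀ k, 0 < ℓ k := fun k => by positivity
  have hℓm : Monotone ℓ := fun j k hjk => by
    have : (2:ℝ) ^ j ≤ 2 ^ k := pow_le_pow_right₀ one_le_two hjk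
    simp only [hℓdef]; nlinarith
  have hQm : Monotone Q := fun j k hjk => cube_mono c (hℓm hjk)
  have hQmeas : ∀ k, MeasurableSet (Q k) := fun k => measurableSet_cube c (ℓ k)
  have hvolQ : ∀ k, volume (Q k) = V k := fun k => volume_cube c (hℓ k).le
  have hV0 : ∀ k, V k ≠ 0 := fun k => by
    simp only [hVdef, ne_eq, ENNReal.ofReal_eq_zero, not_le]; positivity
  have hVt : ∀ k, V k ≠ ∞ := fun k => ENNReal.ofReal_ne_top
  have hU0 : ∀ k, U k ≠ 0 := fun k => lint_pos hu hu0 (by rw [hvolQ]; exact hV0 k)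
  have hm0 : ∀ k, m k ≠ 0 := fun k => lint_pos hσ hσ0 (by rw [hvolQ]; exact hV0 k)
  have hAk : ∀ k, ((V k)⁻¹ * U k) ^ (1/a) * ((V k)⁻¹ * m k) ^ (1/b) ≤ A :=
    fun k => hAc c (ℓ k) (hℓ k)
  have hfin : ∀ k, U k ≠ ∞ ∧ m k ≠ ∞ :=
    fun k => fin_of_Acond ha0 hb0 (hV0 k) (hVt k) (hU0 k) (hm0 k) hAt (hAk k)
  have hUle : ∀ k, U k ≤ A ^ a * (V k) ^ (1 + a/b) * ((m k) ^ (a/b))⁻¹ :=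
    fun k => Acond_le ha0 hb0 (hV0 k) (hVt k) (hfin k).1 (hm0 k) (hfin k).2 (hAk k)
  -- reverse doubling
  set r' : ℝ := (a + b) / a with hr'def
  have hr'1 : 1 ≤ r' := by rw [hr'def, le_div_iff₀ ha0]; linarith
  set e : ℝ≥0∞ := (2:ℝ≥0∞) ^ (-r') * A ^ (-b) with hedef
  have he0 : e ≠ 0 :=
    mul_ne_zero (rpow_ne_zero' (by norm_num) (by norm_num) _) (rpow_ne_zero' hA0 hAt _)
  have het : e ≠ ∞ :=
    ENNReal.mul_ne_top (rpow_ne_top' (by norm_num) (by norm_num) _) (rpow_ne_top' hA0 hAt _)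
  have he12 : e ≤ 1/2 := by
    have h1 : (2:ℝ≥0∞) ^ (-r') ≤ 2 ^ (-1:ℝ) :=
      ENNReal.rpow_le_rpow_of_exponent_le (by norm_num) (by linarith)
    have h2 : A ^ (-b:ℝ) ≤ 1 := by
      simpa using ENNReal.rpow_le_rpow_of_exponent_le hA1 (show -b ≤ 0 by linarith)
    calc e ≤ 2 ^ (-1:ℝ) * 1 := mul_le_mul' h1 h2
      _ = 1/2 := by rw [mul_one, ENNReal.rpow_neg_one]; norm_num
  have hℓsucc : ∀ k, ℓ (k+1) = 2 * ℓ k := by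
    intro k; simp only [hℓdef, pow_succ]; ring
  have hrev : ∀ k, e * m (k+1) ≤ ∫⁻ x in Q (k+1) \ Q k, σ x := by
    intro k
    set Ek : Set (E n) := Q (k+1) \ Q k with hEkdef
    set Y : ℝ≥0∞ := ∫⁻ x in Ek, σ x with hYdef
    set X : ℝ≥0∞ := ∫⁻ x in Ek, u x with hXdef
    have hEmeas : MeasurableSet Ek := (hQmeas (k+1)).diff (hQmeas k)
    have hYm : Y ≤ m (k+1) := lintegral_mono_set diff_subset
    have hXU : X ≤ U (k+1) := lintegral_mono_set diff_subset
    have hYt : Y ≠ ∞ := ne_top_of_le_ne_top (hfin (k+1)).2 hYm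
    have hvolE : volume Ek = V (k+1) - V k := by
      rw [hEkdef, measure_diff (hQm (Nat.le_succ k)) (hQmeas k).nullMeasurableSet
        (by rw [hvolQ]; exact hVt k), hvolQ, hvolQ]
    have h2n : (2:ℝ) ≤ 2 ^ n := le_self_pow₀ one_le_two hn.ne'
    have hvol2 : V (k+1) ≤ 2 * volume Ek := by
      rw [hvolE, hVdef]
      simp only
      rw [← ENNReal.ofReal_sub _ (by positivity : (0:ℝ) ≤ ℓ k ^ n),
        show (2:ℝ≥0∞) = ENNReal.ofReal 2 by norm_num, ← ENNReal.ofReal_mul (by norm_num)]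
      apply ENNReal.ofReal_le_ofReal
      have hexp : ℓ (k+1) ^ n = 2 ^ n * ℓ k ^ n := by rw [hℓsucc, mul_pow]
      have hl : (0:ℝ) < ℓ k ^ n := by positivity
      nlinarith
    have hmeasle := measure_le_mul ha0 hb0 hu hσ hpt Ek
    set R : ℝ≥0∞ := A ^ a * (V (k+1)) ^ (1 + a/b) * ((m (k+1)) ^ (a/b))⁻¹ with hRdef
    have hRt : R ≠ ∞ := by
      refine ENNReal.mul_ne_top (ENNReal.mul_ne_top (rpow_ne_top' hA0 hAt _)
        (ENNReal.rpow_ne_top_of_nonneg (by positivity) (hVt _))) ?_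
      simpa using rpow_ne_zero' (hm0 (k+1)) (hfin (k+1)).2 (a/b)
    have h1 : volume Ek ≤ R ^ (b/(a+b)) * Y ^ (a/(a+b)) := by
      refine hmeasle.trans (mul_le_mul_left ?_ _)
      exact ENNReal.rpow_le_rpow (hXU.trans (hUle (k+1))) (by positivity)
    have h2 := ENNReal.rpow_le_rpow h1 (show (0:ℝ) ≤ r' by positivity)
    have hYab : Y ^ (a/(a+b)) ≠ ∞ := ENNReal.rpow_ne_top_of_nonneg (by positivity) hYt
    have hab : (0:ℝ) < a + b := by linarith
    rw [ENNReal.mul_rpow_of_ne_top (ENNReal.rpow_ne_top_of_nonneg (by positivity) hRt) hYab,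
      ← ENNReal.rpow_mul, ← ENNReal.rpow_mul,
      show b/(a+b) * r' = b/a by rw [hr'def]; field_simp,
      show a/(a+b) * r' = 1 by rw [hr'def]; field_simp,
      ENNReal.rpow_one] at h2
    have hRba : R ^ (b/a) = A ^ b * (V (k+1)) ^ r' * (m (k+1))⁻¹ := by
      rw [hRdef,
        ENNReal.mul_rpow_of_ne_top (ENNReal.mul_ne_top (rpow_ne_top' hA0 hAt _)
          (ENNReal.rpow_ne_top_of_nonneg (by positivity) (hVt _)))
          (by simpa using rpow_ne_zero' (hm0 (k+1)) (hfin (k+1)).2 (a/b)),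
        ENNReal.mul_rpow_of_ne_top (rpow_ne_top' hA0 hAt _)
          (ENNReal.rpow_ne_top_of_nonneg (by positivity) (hVt _)),
        ← ENNReal.rpow_mul, ← ENNReal.rpow_mul, ENNReal.inv_rpow, ← ENNReal.rpow_mul,
        show a * (b/a) = b by field_simp,
        show (1 + a/b) * (b/a) = r' by rw [hr'def]; field_simp; ring,
        show a/b * (b/a) = 1 by field_simp,
        ENNReal.rpow_one]
    rw [hRba] at h2
    have hVr0 : (V (k+1)) ^ r' ≠ 0 := rpow_ne_zero' (hV0 _) (hVt _) _
    have hVrt : (V (k+1)) ^ r' ≠ ∞ := rpow_ne_top' (hV0 _) (hVt _) _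
    have h3 : (V (k+1)) ^ r' * (2:ℝ≥0∞) ^ (-r') ≤ volume Ek ^ r' := by
      have hdiv : V (k+1) / 2 ≤ volume Ek := by
        rw [ENNReal.div_le_iff_le_mul (Or.inl two_ne_zero) (Or.inl ENNReal.ofNat_ne_top)]
        rw [mul_comm]; exact hvol2
      calc (V (k+1)) ^ r' * (2:ℝ≥0∞) ^ (-r') = (V (k+1) / 2) ^ r' := by
            rw [ENNReal.div_rpow_of_nonneg _ _ (by positivity), div_eq_mul_inv,
              ENNReal.rpow_neg]
        _ ≤ volume Ek ^ r' := ENNReal.rpow_le_rpow hdiv (by positivity)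
    have h4 : (V (k+1)) ^ r' * (2:ℝ≥0∞) ^ (-r') ≤
        (V (k+1)) ^ r' * (A ^ b * (m (k+1))⁻¹ * Y) := by
      refine (h3.trans h2).trans (le_of_eq ?_)
      ring
    have h5 : (2:ℝ≥0∞) ^ (-r') ≤ A ^ b * (m (k+1))⁻¹ * Y :=
      (ENNReal.mul_le_mul_iff_right hVr0 hVrt).mp h4
    calc e * m (k+1) = (2:ℝ≥0∞) ^ (-r') * (A ^ (-b) * m (k+1)) := by
          rw [hedef]; ring
      _ ≤ A ^ b * (m (k+1))⁻¹ * Y * (A ^ (-b) * m (k+1)) := mul_le_mul_left h5 _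
      _ = Y * (A ^ b * A ^ (-b)) * ((m (k+1))⁻¹ * m (k+1)) := by ring
      _ = Y := by
          rw [← ENNReal.rpow_add b (-b) hA0 hAt, add_neg_cancel, ENNReal.rpow_zero,
            ENNReal.inv_mul_cancel (hm0 (k+1)) (hfin (k+1)).2, mul_one, mul_one]
  set t : ℝ≥0∞ := 1 - e with htdef
  have ht1 : t ≤ 1 := tsub_le_self
  have hstep : ∀ k, m k ≤ t * m (k+1) := by
    intro k
    set Y : ℝ≥0∞ := ∫⁻ x in Q (k+1) \ Q k, σ x with hYdef
    have hEmeas : MeasurableSet (Q (k+1) \ Q k) := (hQmeas (k+1)).diff (hQmeas k)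
    have hYm : Y ≤ m (k+1) := lintegral_mono_set diff_subset
    have hYt : Y ≠ ∞ := ne_top_of_le_ne_top (hfin (k+1)).2 hYm
    have hsplit : m k + Y = m (k+1) := by
      rw [hmdef]
      simp only
      rw [← lintegral_union hEmeas disjoint_sdiff_right,
        union_diff_cancel (hQm (Nat.le_succ k))]
    have hm_eq : m k = m (k+1) - Y := ENNReal.eq_sub_of_add_eq hYt hsplit
    rw [hm_eq, htdef]
    calc m (k+1) - Y ≤ m (k+1) - e * m (k+1) := tsub_le_tsub_left (hrev k) _
      _ = (1 - e) * m (k+1) := by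
          rw [ENNReal.sub_mul (fun _ _ => (hfin (k+1)).2), one_mul]
  have hiter : ∀ k, m 0 ≤ t ^ k * m k := by
    intro k
    induction k with
    | zero => simp
    | succ k ih =>
      calc m 0 ≤ t ^ k * m k := ih
        _ ≤ t ^ k * (t * m (k+1)) := mul_le_mul_right (hstep k) _
        _ = t ^ (k+1) * m (k+1) := by ring
  -- geometric sum
  set θ : ℝ := min (a/b) 1 with hθdef
  have hθ0 : 0 < θ := lt_min (by positivity) one_pos
  have hθ1 : θ ≤ 1 := min_le_right _ _
  have hθab : θ ≤ a/b := min_le_left _ _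
  have ht0 : t ≠ 0 := by
    have h1 : e < 1 := he12.trans_lt (by norm_num)
    have h2 : (0:ℝ≥0∞) < 1 - e := tsub_pos_of_lt h1
    rw [htdef]; exact h2.ne'
  have htt : t ≠ ∞ := ne_top_of_le_ne_top ENNReal.one_ne_top ht1
  have hSb : (∑' k, ((m k) ^ (a/b))⁻¹) ≤
      ((m 0) ^ (a/b))⁻¹ * ((ENNReal.ofReal θ)⁻¹ * ((2:ℝ≥0∞) ^ r' * A ^ b)) := by
    have htk0 : ∀ k : ℕ, (t ^ (a/b)) ^ k ≠ 0 :=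
      fun k => pow_ne_zero k (rpow_ne_zero' ht0 htt _)
    have htkt : ∀ k : ℕ, (t ^ (a/b)) ^ k ≠ ∞ :=
      fun k => ENNReal.pow_ne_top (rpow_ne_top' ht0 htt _)
    have hterm : ∀ k, ((m k) ^ (a/b))⁻¹ ≤ (t ^ (a/b)) ^ k * ((m 0) ^ (a/b))⁻¹ := by
      intro k
      have h1 : (m 0) ^ (a/b) ≤ (t ^ (a/b)) ^ k * (m k) ^ (a/b) := by
        calc (m 0) ^ (a/b) ≤ (t ^ k * m k) ^ (a/b) :=
              ENNReal.rpow_le_rpow (hiter k) (by positivity)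
          _ = (t ^ k) ^ (a/b) * (m k) ^ (a/b) :=
              ENNReal.mul_rpow_of_ne_top (ENNReal.pow_ne_top htt) (hfin k).2 _
          _ = (t ^ (a/b)) ^ k * (m k) ^ (a/b) := by
              rw [← ENNReal.rpow_natCast t k, ← ENNReal.rpow_mul,
                mul_comm (k:ℝ) (a/b), ENNReal.rpow_mul, ENNReal.rpow_natCast]
      calc ((m k) ^ (a/b))⁻¹
          = (t ^ (a/b)) ^ k * (((t ^ (a/b)) ^ k)⁻¹ * ((m k) ^ (a/b))⁻¹) := by
            rw [← mul_assoc, ENNReal.mul_inv_cancel (htk0 k) (htkt k), one_mul]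
        _ = (t ^ (a/b)) ^ k * ((t ^ (a/b)) ^ k * (m k) ^ (a/b))⁻¹ := by
            rw [ENNReal.mul_inv (Or.inl (htk0 k)) (Or.inl (htkt k))]
        _ ≤ (t ^ (a/b)) ^ k * ((m 0) ^ (a/b))⁻¹ :=
            mul_le_mul_right (ENNReal.inv_le_inv' h1) _
    have hgb : ENNReal.ofReal θ * e ≤ 1 - t ^ (a/b) := by
      have hmono : t ^ (a/b) ≤ t ^ θ :=
        ENNReal.rpow_le_rpow_of_exponent_ge ht1 hθab
      calc ENNReal.ofReal θ * e ≤ 1 - (1 - e) ^ θ := geom_denominator he0 he12 hθ0 hθ1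
        _ = 1 - t ^ θ := by rw [htdef]
        _ ≤ 1 - t ^ (a/b) := tsub_le_tsub_left hmono _
    have hθ0' : ENNReal.ofReal θ ≠ 0 := by simp [ENNReal.ofReal_eq_zero]; linarith
    have he_inv : e⁻¹ = (2:ℝ≥0∞) ^ r' * A ^ b := by
      rw [hedef, ENNReal.mul_inv (Or.inr (rpow_ne_top' hA0 hAt _))
        (Or.inl (rpow_ne_top' (by norm_num) (by norm_num) _)),
        ENNReal.rpow_neg, inv_inv, ENNReal.rpow_neg A b, inv_inv]
    calc (∑' k, ((m k) ^ (a/b))⁻¹) ≤ ∑' k, (t ^ (a/b)) ^ k * ((m 0) ^ (a/b))⁻¹ :=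
          ENNReal.tsum_le_tsum hterm
      _ = (1 - t ^ (a/b))⁻¹ * ((m 0) ^ (a/b))⁻¹ := by
          rw [ENNReal.tsum_mul_right, ENNReal.tsum_geometric]
      _ ≤ (ENNReal.ofReal θ * e)⁻¹ * ((m 0) ^ (a/b))⁻¹ :=
          mul_le_mul_left (ENNReal.inv_le_inv' hgb) _
      _ = ((m 0) ^ (a/b))⁻¹ * ((ENNReal.ofReal θ)⁻¹ * ((2:ℝ≥0∞) ^ r' * A ^ b)) := by
          rw [ENNReal.mul_inv (Or.inl hθ0') (Or.inl ENNReal.ofReal_ne_top), he_inv]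
          ring
  -- tail estimate
  set T : ℕ → ℝ≥0∞ := fun k => ENNReal.ofReal ((2:ℝ) ^ (((k:ℝ) - 2) * ((α - n) * a)))
    with hTdef
  have hαa : (α - (n:ℝ)) * a ≤ 0 := by nlinarith
  have htail : (∫⁻ x, tail n α c s x ^ a * u x) ≤ ∑' k, T k * U k := by
    have hDmeas : ∀ k, MeasurableSet (disjointed Q k) := MeasurableSet.disjointed hQmeas
    have hUniv : ⋃ k, Q k = univ := by
      simp only [hQdef, hℓdef]
      exact iUnion_cube c hs
    have hcover : (∫⁻ x, tail n α c s x ^ a * u x) =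
        ∑' k, ∫⁻ x in disjointed Q k, tail n α c s x ^ a * u x := by
      rw [← setLIntegral_univ, ← hUniv, ← iUnion_disjointed,
        lintegral_iUnion hDmeas (disjoint_disjointed Q)]
    rw [hcover]
    refine ENNReal.tsum_le_tsum fun k => ?_
    have hptw : ∀ x ∈ disjointed Q k, tail n α c s x ^ a ≤ T k := by
      intro x hx
      have hnorm : (0:ℝ) ≤ ‖x - c‖ / s := by positivity
      have hz0 : (0:ℝ) < 1 + ‖x - c‖ / s := by linarith
      have hclaim : (2:ℝ) ^ ((k:ℝ) - 2) ≤ 1 + ‖x - c‖ / s := by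
        match k with
        | 0 =>
          have : (2:ℝ) ^ ((0:ℝ) - 2) ≤ 1 :=
            Real.rpow_le_one_of_one_le_of_nonpos one_le_two (by norm_num)
          push_cast
          linarith
        | (k+1) =>
          rw [show disjointed Q (k+1) = Q (k+1) \ Q k from hQm.disjointed_succ (not_isMax k)] at hx
          obtain ⟨hx1, hx2⟩ := hx
          have : ¬ (∀ i, |x i - c i| ≤ ℓ k / 2) := hx2
          push_neg at this
          obtain ⟨i, hi⟩ := this
          have hxc : ℓ k / 2 < ‖x - c‖ := by
            refine hi.trans_le (le_trans (le_of_eq ?_) (abs_coord_le_norm (x - c) i))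
            congr 1
          have hdiv : (2:ℝ) ^ k / 2 < ‖x - c‖ / s := by
            rw [div_lt_div_iff₀ (by norm_num) hs] at *
            simp only [hℓdef] at hxc
            nlinarith
          have hpow : (2:ℝ) ^ (((k:ℕ)+1:ℝ) - 2) = 2 ^ k / 2 := by
            rw [show ((k:ℕ)+1:ℝ) - 2 = (k:ℝ) - 1 by ring, Real.rpow_sub two_pos,
              Real.rpow_natCast, Real.rpow_one]
          push_cast
          push_cast at hpow
          rw [hpow]
          linarith
      have h1 : tail n α c s x ^ a =
          ENNReal.ofReal ((1 + ‖x - c‖ / s) ^ ((α - (n:ℝ)) * a)) := by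
        rw [tail, ENNReal.ofReal_rpow_of_pos (Real.rpow_pos_of_pos hz0 _),
          ← Real.rpow_mul hz0.le]
      rw [h1, hTdef]
      apply ENNReal.ofReal_le_ofReal
      calc (1 + ‖x - c‖ / s) ^ ((α - (n:ℝ)) * a)
          ≤ ((2:ℝ) ^ ((k:ℝ) - 2)) ^ ((α - (n:ℝ)) * a) :=
            Real.rpow_le_rpow_of_nonpos (Real.rpow_pos_of_pos two_pos _) hclaim hαa
        _ = (2:ℝ) ^ (((k:ℝ) - 2) * ((α - (n:ℝ)) * a)) := by
            rw [← Real.rpow_mul (by norm_num : (0:ℝ) ≤ 2)]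
    calc (∫⁻ x in disjointed Q k, tail n α c s x ^ a * u x)
        ≤ ∫⁻ x in disjointed Q k, T k * u x :=
          setLIntegral_mono' (hDmeas k) fun x hx => mul_le_mul_left (hptw x hx) _
      _ = T k * ∫⁻ x in disjointed Q k, u x := lintegral_const_mul _ hu
      _ ≤ T k * U k := mul_le_mul_right (lintegral_mono_set (disjointed_subset Q k)) _
  set C₀ : ℝ≥0∞ := ENNReal.ofReal ((2:ℝ) ^ (2 * ((n:ℝ) - α) * a)) with hC₀def
  have hb1 : (0:ℝ) < 1 + a/b := by positivity
  have hTV : ∀ k, T k * (V k) ^ (1 + a/b) = C₀ * (V 0) ^ (1 + a/b) := by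
    intro k
    have hℓ0 : ℓ 0 = s := by simp [hℓdef]
    have hVkpos : (0:ℝ) < ℓ k ^ n := by positivity
    have hV0pos : (0:ℝ) < ℓ 0 ^ n := by positivity
    rw [hTdef, hVdef, hC₀def]
    simp only
    rw [ENNReal.ofReal_rpow_of_pos hVkpos, ENNReal.ofReal_rpow_of_pos hV0pos,
      ← ENNReal.ofReal_mul (by positivity), ← ENNReal.ofReal_mul (by positivity)]
    congr 1
    have hexp : (ℓ k) ^ n = (2:ℝ) ^ (k * n) * s ^ n := by
      rw [hℓdef]
      simp only
      rw [mul_pow, ← pow_mul]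
    rw [hℓ0, hexp, Real.mul_rpow (by positivity) (by positivity),
      ← Real.rpow_natCast (2:ℝ) (k * n), ← Real.rpow_mul (by norm_num : (0:ℝ) ≤ 2),
      ← mul_assoc, ← Real.rpow_add two_pos]
    congr 2
    push_cast
    linear_combination (k:ℝ) * hbal
  -- combine
  have hsum : (∑' k, T k * U k) ≤
      A ^ a * C₀ * (V 0) ^ (1 + a/b) * ∑' k, ((m k) ^ (a/b))⁻¹ := by
    rw [← ENNReal.tsum_mul_left]
    refine ENNReal.tsum_le_tsum fun k => ?_
    calc T k * U k ≤ T k * (A ^ a * (V k) ^ (1 + a/b) * ((m k) ^ (a/b))⁻¹) :=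
          mul_le_mul_right (hUle k) _
      _ = A ^ a * (T k * (V k) ^ (1 + a/b)) * ((m k) ^ (a/b))⁻¹ := by ring
      _ = A ^ a * C₀ * (V 0) ^ (1 + a/b) * ((m k) ^ (a/b))⁻¹ := by rw [hTV k]; ring
  -- final assembly
  set P : ℝ≥0∞ := V 0 with hPdef
  set M : ℝ≥0∞ := m 0 with hMdef
  set K : ℝ≥0∞ := C₀ * (ENNReal.ofReal θ)⁻¹ * (2:ℝ≥0∞) ^ r' with hKdef
  have hP0 : P ≠ 0 := hV0 0
  have hPt : P ≠ ∞ := hVt 0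
  have hM0 : M ≠ 0 := hm0 0
  have hMt : M ≠ ∞ := (hfin 0).2
  have hθ0' : ENNReal.ofReal θ ≠ 0 := by simp only [ne_eq, ENNReal.ofReal_eq_zero, not_le]; linarith
  have hKt : K ≠ ∞ := by
    refine ENNReal.mul_ne_top (ENNReal.mul_ne_top ENNReal.ofReal_ne_top ?_) ?_
    · exact ENNReal.inv_ne_top.mpr hθ0'
    · exact rpow_ne_top' (by norm_num) (by norm_num) _
  set BIG : ℝ≥0∞ := A ^ a * C₀ * P ^ (1 + a/b) *
      ((M ^ (a/b))⁻¹ * ((ENNReal.ofReal θ)⁻¹ * ((2:ℝ≥0∞) ^ r' * A ^ b))) with hBIGdef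
  have hItail : (∫⁻ x, tail n α c s x ^ a * u x) ≤ BIG := by
    refine htail.trans (hsum.trans ?_)
    rw [hBIGdef]
    exact mul_le_mul_right hSb _
  have hPs : ENNReal.ofReal (s ^ n) = P := by
    rw [hPdef, hVdef]; simp [hℓdef]
  have hm00 : (∫⁻ x in cube n c s, σ x) = M := by
    rw [hMdef, hmdef]; simp only [hQdef, hℓdef]; norm_num
  have hAab : A ^ a * A ^ b = A ^ (a+b) := (ENNReal.rpow_add a b hA0 hAt).symm
  have hPsplit : P ^ (1 + a/b) = P * P ^ (a/b) := by
    rw [ENNReal.rpow_add 1 (a/b) hP0 hPt, ENNReal.rpow_one]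
  have hX : P⁻¹ * BIG = K * A ^ (a+b) * P ^ (a/b) * (M ^ (a/b))⁻¹ := by
    calc P⁻¹ * BIG
        = (P⁻¹ * P) * ((C₀ * (ENNReal.ofReal θ)⁻¹ * (2:ℝ≥0∞) ^ r') * (A ^ a * A ^ b) *
            P ^ (a/b) * (M ^ (a/b))⁻¹) := by rw [hBIGdef, hPsplit]; ring
      _ = K * A ^ (a+b) * P ^ (a/b) * (M ^ (a/b))⁻¹ := by
          rw [ENNReal.inv_mul_cancel hP0 hPt, one_mul, hAab, hKdef]
  have hXpow : (P⁻¹ * BIG) ^ (1/a) =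
      K ^ (1/a) * A ^ (1 + b/a) * P ^ (1/b) * (M ^ (1/b))⁻¹ := by
    rw [hX,
      ENNReal.mul_rpow_of_ne_top
        (ENNReal.mul_ne_top (ENNReal.mul_ne_top hKt (rpow_ne_top' hA0 hAt _))
          (rpow_ne_top' hP0 hPt _))
        (by simpa using rpow_ne_zero' hM0 hMt (a/b)),
      ENNReal.mul_rpow_of_ne_top (ENNReal.mul_ne_top hKt (rpow_ne_top' hA0 hAt _))
        (rpow_ne_top' hP0 hPt _),
      ENNReal.mul_rpow_of_ne_top hKt (rpow_ne_top' hA0 hAt _),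
      ← ENNReal.rpow_mul A, ← ENNReal.rpow_mul P, ENNReal.inv_rpow, ← ENNReal.rpow_mul M,
      show (a+b) * (1/a) = 1 + b/a by field_simp,
      show (a/b) * (1/a) = 1/b by rw [div_mul_div_comm, mul_one, div_eq_div_iff (by positivity) (by positivity)]; ring]
  have hfactor2 : (P⁻¹ * M) ^ (1/b) = (P ^ (1/b))⁻¹ * M ^ (1/b) := by
    rw [ENNReal.mul_rpow_of_ne_top (by simpa using hP0) hMt, ENNReal.inv_rpow]
  calc ((ENNReal.ofReal (s ^ n))⁻¹ * ∫⁻ x, tail n α c s x ^ a * u x) ^ (1/a) *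
        ((ENNReal.ofReal (s ^ n))⁻¹ * ∫⁻ x in cube n c s, σ x) ^ (1/b)
      ≤ (P⁻¹ * BIG) ^ (1/a) * (P⁻¹ * M) ^ (1/b) := by
        rw [hPs, hm00]
        exact mul_le_mul_left (ENNReal.rpow_le_rpow (mul_le_mul_right hItail _)
          (by positivity)) _
    _ = K ^ (1/a) * A ^ (1 + b/a) * ((P ^ (1/b)) * (P ^ (1/b))⁻¹) *
          ((M ^ (1/b))⁻¹ * M ^ (1/b)) := by rw [hXpow, hfactor2]; ring
    _ = K ^ (1/a) * A ^ (1 + b/a) := by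
        rw [ENNReal.mul_inv_cancel (rpow_ne_zero' hP0 hPt _) (rpow_ne_top' hP0 hPt _),
          ENNReal.inv_mul_cancel (rpow_ne_zero' hM0 hMt _) (rpow_ne_top' hM0 hMt _),
          mul_one, mul_one]
    _ = Cval n a b α * A ^ (1 + b/a) := by
        rw [hKdef, hC₀def, hθdef, hr'def, Cval]


set_option maxHeartbeats 2000000 in
/-- **The one-tailed characteristic is controlled by a power of the no-tail one.**  Let
`1 < p < q < ∞` and `0 < α < n` with `1/p − 1/q = α/n`.  There is a constant
`C = C_{p,q,n} < ∞` such that every positive finite measurable weight `w` with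
`A_{p,q}(w) < ∞` satisfies `Ā_{p,q}(w) ≤ C · A_{p,q}(w)^{1 + max{p'/q, q/p'}}`. -/
theorem oneTailed_le_power_of_Apq (n : ℕ) (hn : 0 < n) (p q α : ℝ)
    (hp : 1 < p) (hpq : p < q) (hα : 0 < α) (hαn : α < n)
    (hbal : 1 / p - 1 / q = α / (n : ℝ)) :
    ∃ C : ℝ≥0∞, C ≠ ∞ ∧
      ∀ w : E n → ℝ≥0∞, Measurable w → (∀ x, 0 < w x ∧ w x < ∞) →
        Apq n p q w ≠ ∞ →
        AbarPq n α p q w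
          ≤ C * Apq n p q w ^ (1 + max ((p / (p - 1)) / q) (q / (p / (p - 1)))) := by
  set b : ℝ := p / (p - 1) with hbdef
  have hn0 : (0:ℝ) < n := by exact_mod_cast hn
  have hp0 : (0:ℝ) < p := by linarith
  have hq1 : 1 < q := hp.trans hpq
  have hq0 : (0:ℝ) < q := by linarith
  have hp1 : p - 1 ≠ 0 := sub_ne_zero.mpr (ne_of_gt hp)
  have hp1' : (0:ℝ) < p - 1 := by linarith
  have hb1 : 1 < b := by
    rw [hbdef, lt_div_iff₀ hp1']; linarith
  have hb0 : (0:ℝ) < b := by linarith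
  have hα' : α = n / p - n / q := by
    field_simp at hbal ⊢
    linarith [hbal]
  have hbal1 : (α - n) * q + n = -((n:ℝ) * q / b) := by
    rw [hα', hbdef]; field_simp; ring
  have hbal2 : (α - n) * b + n = -((n:ℝ) * b / q) := by
    rw [hα', hbdef]; field_simp; ring
  have hexp : 1 - 1 / p = 1 / b := by
    rw [hbdef]; field_simp
  refine ⟨Cval n q b α + Cval n b q α, ?_, ?_⟩
  · exact ENNReal.add_ne_top.mpr ⟨Cval_ne_top hq0 hb0, Cval_ne_top hb0 hq0⟩
  intro w hw hwpos hAt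
  set A : ℝ≥0∞ := Apq n p q w with hAdef
  set u : E n → ℝ≥0∞ := fun x => w x ^ q with hudef
  set σ : E n → ℝ≥0∞ := fun x => w x ^ (-b) with hσdef
  have hu : Measurable u := hw.pow_const q
  have hσ : Measurable σ := hw.pow_const (-b)
  have hu0 : ∀ x, 0 < u x := fun x => ENNReal.rpow_pos (hwpos x).1 (hwpos x).2.ne
  have hσ0 : ∀ x, 0 < σ x := fun x => ENNReal.rpow_pos (hwpos x).1 (hwpos x).2.ne
  have hut : ∀ x, u x ≠ ∞ := fun x => rpow_ne_top' (hwpos x).1.ne' (hwpos x).2.ne _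
  have hσt : ∀ x, σ x ≠ ∞ := fun x => rpow_ne_top' (hwpos x).1.ne' (hwpos x).2.ne _
  have hqb : (0:ℝ) < q + b := by linarith
  have hpt1 : ∀ x, u x ^ (b / (q + b)) * σ x ^ (q / (q + b)) = 1 := by
    intro x
    rw [hudef, hσdef]
    simp only
    rw [← ENNReal.rpow_mul, ← ENNReal.rpow_mul,
      ← ENNReal.rpow_add _ _ (hwpos x).1.ne' (hwpos x).2.ne,
      show q * (b / (q + b)) + -b * (q / (q + b)) = 0 by field_simp; ring,
      ENNReal.rpow_zero]
  have hpt2 : ∀ x, σ x ^ (q / (b + q)) * u x ^ (b / (b + q)) = 1 := by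
    intro x
    rw [hudef, hσdef]
    simp only
    rw [← ENNReal.rpow_mul, ← ENNReal.rpow_mul,
      ← ENNReal.rpow_add _ _ (hwpos x).1.ne' (hwpos x).2.ne,
      show -b * (q / (b + q)) + q * (b / (b + q)) = 0 by field_simp; ring,
      ENNReal.rpow_zero]
  have hAc1 : ∀ (c : E n) (s : ℝ), 0 < s →
      ((ENNReal.ofReal (s ^ n))⁻¹ * ∫⁻ x in cube n c s, u x) ^ (1 / q) *
        ((ENNReal.ofReal (s ^ n))⁻¹ * ∫⁻ x in cube n c s, σ x) ^ (1 / b) ≤ A := by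
    intro c s hs
    rw [← hexp, hAdef, Apq]
    exact le_iSup_of_le c (le_iSup_of_le s (le_iSup_of_le hs le_rfl))
  have hAc2 : ∀ (c : E n) (s : ℝ), 0 < s →
      ((ENNReal.ofReal (s ^ n))⁻¹ * ∫⁻ x in cube n c s, σ x) ^ (1 / b) *
        ((ENNReal.ofReal (s ^ n))⁻¹ * ∫⁻ x in cube n c s, u x) ^ (1 / q) ≤ A := by
    intro c s hs
    rw [mul_comm]
    exact hAc1 c s hs
  -- 1 ≤ A
  have hA1 : 1 ≤ A := by
    by_contra hcon
    push_neg at hcon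
    set c0 : E n := 0 with hc0def
    have hvol : volume (cube n c0 1) = 1 := by
      rw [volume_cube c0 (by norm_num : (0:ℝ) ≤ 1)]; norm_num
    have hV1 : (ENNReal.ofReal ((1:ℝ) ^ n)) = 1 := by norm_num
    set U0 : ℝ≥0∞ := ∫⁻ x in cube n c0 1, u x with hU0def
    set m0 : ℝ≥0∞ := ∫⁻ x in cube n c0 1, σ x with hm0def
    have hU00 : U0 ≠ 0 := lint_pos hu hu0 (by rw [hvol]; norm_num)
    have hm00 : m0 ≠ 0 := lint_pos hσ hσ0 (by rw [hvol]; norm_num)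
    have hAc0 : ((1:ℝ≥0∞)⁻¹ * U0) ^ (1/q) * ((1:ℝ≥0∞)⁻¹ * m0) ^ (1/b) ≤ A := by
      have := hAc1 c0 1 one_pos
      rwa [hV1] at this
    have hfin0 := fin_of_Acond hq0 hb0 one_ne_zero ENNReal.one_ne_top hU00 hm00 hAt
      (by simpa using hAc0)
    have hml := measure_le_mul hq0 hb0 hu hσ hpt1 (cube n c0 1)
    rw [hvol] at hml
    set γ : ℝ := q * b / (q + b) with hγdef
    have hγ0 : 0 < γ := by positivity
    have hkey : (1:ℝ≥0∞) ≤ (U0 ^ (1/q) * m0 ^ (1/b)) ^ γ := by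
      refine hml.trans (le_of_eq ?_)
      rw [ENNReal.mul_rpow_of_ne_top (ENNReal.rpow_ne_top_of_nonneg (by positivity) (hfin0).1)
        (ENNReal.rpow_ne_top_of_nonneg (by positivity) (hfin0).2),
        ← ENNReal.rpow_mul, ← ENNReal.rpow_mul,
        show 1/q * γ = b / (q + b) by rw [hγdef]; field_simp,
        show 1/b * γ = q / (q + b) by rw [hγdef]; field_simp]
    have hkey2 : (U0 ^ (1/q) * m0 ^ (1/b)) ^ γ ≤ A ^ γ := by
      refine ENNReal.rpow_le_rpow ?_ hγ0.le
      simpa using hAc0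
    have : (1:ℝ≥0∞) ≤ A ^ γ := hkey.trans hkey2
    exact absurd this (ENNReal.rpow_lt_one hcon hγ0).not_ge
  -- apply onesided twice
  have hos1 := onesided hn q b α hq1 hb1 hα hαn hbal1 u σ hu hσ hu0 hσ0 hpt1 A hAt hA1 hAc1
  have hos2 := onesided hn b q α hb1 hq1 hα hαn hbal2 σ u hσ hu hσ0 hu0 hpt2 A hAt hA1 hAc2
  have hmax1 : A ^ (1 + b / q) ≤ A ^ (1 + max (b / q) (q / b)) :=
    ENNReal.rpow_le_rpow_of_exponent_le hA1 (by simp [le_max_left])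
  have hmax2 : A ^ (1 + q / b) ≤ A ^ (1 + max (b / q) (q / b)) :=
    ENNReal.rpow_le_rpow_of_exponent_le hA1 (by simp [le_max_right])
  rw [AbarPq, add_mul]
  refine add_le_add ?_ ?_
  · refine iSup_le fun c => iSup_le fun s => iSup_le fun hs => ?_
    rw [hexp]
    exact (hos1 c s hs).trans ((mul_le_mul_right hmax1 _))
  · refine iSup_le fun c => iSup_le fun s => iSup_le fun hs => ?_
    rw [hexp, mul_comm]
    exact (hos2 c s hs).trans ((mul_le_mul_right hmax2 _))


end
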